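/- Let n ≥ 1, r > 0, and let γ : ℝ → ℝ be strictly increasing with γ(0) = 0. Let x_i, x_j : ℝ → ℝⁿ be differentiable trajectories such that at every time t with x_i(t) ≠ x_j(t), the control barrier function condition ⟨x_i(t) − x_j(t), x_i'(t) − x_j'(t)⟩ / ‖x_i(t) − x_j(t)‖ ≥ −γ(‖x_i(t) − x_j(t)‖ − r) holds. If ‖x_i(0) − x_j(0)‖ ≥ r, then ‖x_i(t) − x_j(t)‖ ≥ r for all t ≥ 0 (inter-robot collision avoidance is guaranteed for all time). -/

import Mathlib

/-- Inter-robot collision avoidance (property P3): under the collision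
avoidance CBF condition, two robots initially at distance at least r stay at
distance at least r for all t ≥ 0. -/
theorem stmt_13 (n : ℕ) (hn : 1 ≤ n) (r : ℝ) (hr : 0 < r)
    (γ : ℝ → ℝ) (hγ : StrictMono γ) (hγ0 : γ 0 = 0)
    (xi xj : ℝ → EuclideanSpace ℝ (Fin n))
    (hxi : Differentiable ℝ xi) (hxj : Differentiable ℝ xj)
    (hcbf : ∀ t, xi t ≠ xj t →
      -γ (‖xi t - xj t‖ - r) ≤
        (inner ℝ (xi t - xj t) (deriv xi t - deriv xj t) : ℝ) / ‖xi t - xj t‖)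
    (h0 : r ≤ ‖xi 0 - xj 0‖) :
    ∀ t, 0 ≤ t → r ≤ ‖xi t - xj t‖ := by
  intro t1 ht1
  by_contra hlt
  push_neg at hlt
  set x : ℝ → EuclideanSpace ℝ (Fin n) := fun t => xi t - xj t with hxdef
  have hxd : ∀ t, HasDerivAt x (deriv xi t - deriv xj t) t := fun t =>
    ((hxi t).hasDerivAt.sub ((hxj t).hasDerivAt))
  set f : ℝ → ℝ := fun t => ‖x t‖ ^ 2 with hfdef
  have hfd : ∀ t, HasDerivAt f (2 * (inner ℝ (x t) (deriv xi t - deriv xj t) : ℝ)) t := by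
    intro t
    have h1 : HasDerivAt (fun s => (inner ℝ (x s) (x s) : ℝ))
        ((inner ℝ (x t) (deriv xi t - deriv xj t) : ℝ)
          + (inner ℝ (deriv xi t - deriv xj t) (x t) : ℝ)) t :=
      (hxd t).inner ℝ (hxd t)
    have heq : f = fun s => (inner ℝ (x s) (x s) : ℝ) :=
      funext fun s => (real_inner_self_eq_norm_sq (x s)).symm
    rw [heq]
    convert h1 using 1
    rw [real_inner_comm (x t)]
    ring
  -- key: whenever ‖x t‖ ≤ r, the inner product is nonnegative
  have key : ∀ t, ‖x t‖ ≤ r → 0 ≤ (inner ℝ (x t) (deriv xi t - deriv xj t) : ℝ) := by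
    intro t ht
    by_cases hz : x t = 0
    · simp [hz]
    · have hne : xi t ≠ xj t := by
        intro h; apply hz; simp [hxdef, h]
      have hnorm : 0 < ‖x t‖ := norm_pos_iff.mpr hz
      have h1 := hcbf t hne
      have h2 : -γ (‖x t‖ - r) * ‖x t‖ ≤ (inner ℝ (x t) (deriv xi t - deriv xj t) : ℝ) :=
        (le_div_iff₀ hnorm).mp h1
      have h3 : γ (‖x t‖ - r) ≤ 0 := by
        rw [← hγ0]; exact hγ.monotone (by linarith)
      have h4 : 0 ≤ -γ (‖x t‖ - r) * ‖x t‖ :=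
        mul_nonneg (by linarith) (norm_nonneg _)
      linarith
  have hf0 : r ^ 2 ≤ f 0 := pow_le_pow_left₀ hr.le h0 2
  have hft1 : f t1 < r ^ 2 := by
    have := norm_nonneg (x t1)
    simp only [hfdef]; nlinarith
  have ht1pos : 0 < t1 := by
    rcases lt_or_eq_of_le ht1 with h | h
    · exact h
    · exfalso; rw [← h] at hft1; linarith
  have hfc : Continuous f := by
    have : Differentiable ℝ f := fun t => (hfd t).differentiableAt
    exact this.continuous
  set S : Set ℝ := {t | t ∈ Set.Icc 0 t1 ∧ r ^ 2 ≤ f t} with hSdef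
  have hS0 : (0 : ℝ) ∈ S := ⟨⟨le_refl 0, ht1⟩, hf0⟩
  have hSbdd : BddAbove S := ⟨t1, fun t ht => ht.1.2⟩
  have hSclosed : IsClosed S := by
    have : S = Set.Icc 0 t1 ∩ {t | r ^ 2 ≤ f t} := rfl
    rw [this]
    exact isClosed_Icc.inter (isClosed_le continuous_const hfc)
  set s := sSup S with hsdef
  have hsS : s ∈ S := hSclosed.csSup_mem ⟨0, hS0⟩ hSbdd
  have hs0 : 0 ≤ s := hsS.1.1
  have hst1 : s ≤ t1 := hsS.1.2
  have hfs : r ^ 2 ≤ f s := hsS.2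
  have hslt : s < t1 := lt_of_le_of_ne hst1 (by intro h; rw [h] at hfs; linarith)
  have hflt : ∀ t ∈ Set.Ioc s t1, f t < r ^ 2 := by
    intro t ht
    by_contra h
    push_neg at h
    have : t ∈ S := ⟨⟨le_trans hs0 ht.1.le, ht.2⟩, h⟩
    have := le_csSup hSbdd this
    exact absurd this (not_le.mpr ht.1)
  have hmono : MonotoneOn f (Set.Icc s t1) := by
    apply monotoneOn_of_deriv_nonneg (convex_Icc s t1) (hfc.continuousOn)
    · intro t ht
      exact ((hfd t).differentiableAt).differentiableWithinAt
    · intro t ht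
      rw [interior_Icc] at ht
      have hle : f t < r ^ 2 := hflt t ⟨ht.1, ht.2.le⟩
      have hle' : ‖x t‖ ^ 2 < r ^ 2 := hle
      have hxt : ‖x t‖ ≤ r := by nlinarith [norm_nonneg (x t)]
      rw [(hfd t).deriv]
      have := key t hxt
      linarith
  have : f s ≤ f t1 :=
    hmono ⟨le_refl s, hst1⟩ ⟨hst1, le_refl t1⟩ hst1
  linarith
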